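/- Let M be an 𝔰𝔩₂(ℂ)-module on which h acts diagonalizably with finite-dimensional eigenspaces. Then M is the internal direct sum, over c ∈ ℂ, of the generalized eigenspaces M^{(c)} = ⋃_{k≥1} ker(Ω - c)^k of the Casimir operator Ω, and each M^{(c)} is an 𝔰𝔩₂(ℂ)-submodule of M. -/

import Mathlib

/-- If `h` acts diagonalizably with finite-dimensional eigenspaces on an `𝔰𝔩₂(ℂ)`-module
`M`, then `M` is the internal direct sum over `c ∈ ℂ` of the generalized eigenspaces
`M^{(c)} = ⋃_k ker(Ω - c)^k` of the Casimir operator `Ω = ½h² + ef + fe`, and each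
`M^{(c)}` is an `𝔰𝔩₂(ℂ)`-submodule. -/
theorem casimir_generalized_eigenspace_decomposition
    (M : Type) [AddCommGroup M] [Module ℂ M]
    (E H F : Module.End ℂ M)
    (hHE : ⁅H, E⁆ = (2 : ℂ) • E)
    (hHF : ⁅H, F⁆ = -((2 : ℂ) • F))
    (hEF : ⁅E, F⁆ = H)
    (hdiag : (⨆ μ : ℂ, H.eigenspace μ) = ⊤)
    (hfin : ∀ μ : ℂ, FiniteDimensional ℂ (H.eigenspace μ)) :
    DirectSum.IsInternal (fun c : ℂ =>
      Module.End.maxGenEigenspace ((2⁻¹ : ℂ) • (H * H) + E * F + F * E) c) ∧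
    (∀ c : ℂ, ∀ m ∈ Module.End.maxGenEigenspace ((2⁻¹ : ℂ) • (H * H) + E * F + F * E) c,
      E m ∈ Module.End.maxGenEigenspace ((2⁻¹ : ℂ) • (H * H) + E * F + F * E) c ∧
      H m ∈ Module.End.maxGenEigenspace ((2⁻¹ : ℂ) • (H * H) + E * F + F * E) c ∧
      F m ∈ Module.End.maxGenEigenspace ((2⁻¹ : ℂ) • (H * H) + E * F + F * E) c) := by
  set Ω : Module.End ℂ M := (2⁻¹ : ℂ) • (H * H) + E * F + F * E with hΩ
  rw [Ring.lie_def] at hHE hHF hEF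
  have h1 : H * E = E * H + (2:ℂ) • E := by rw [← hHE]; abel
  have h2 : H * F = F * H - (2:ℂ) • F := by
    have := hHF; rw [sub_eq_iff_eq_add] at this; rw [this]; abel
  have h3 : E * F = F * E + H := by rw [← hEF]; abel
  have h1' : ∀ x : Module.End ℂ M, H * (E * x) = E * (H * x) + (2:ℂ) • (E * x) := by
    intro x; rw [← mul_assoc, h1, add_mul, smul_mul_assoc, mul_assoc]
  have h2' : ∀ x : Module.End ℂ M, H * (F * x) = F * (H * x) - (2:ℂ) • (F * x) := by
    intro x; rw [← mul_assoc, h2, sub_mul, smul_mul_assoc, mul_assoc]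
  have h3' : ∀ x : Module.End ℂ M, E * (F * x) = F * (E * x) + H * x := by
    intro x; rw [← mul_assoc, h3, add_mul, mul_assoc]
  have hcE : Commute Ω E := by
    unfold Commute SemiconjBy
    simp only [hΩ, add_mul, mul_add, smul_mul_assoc, mul_smul_comm, smul_add, smul_sub,
      mul_assoc, h1, h2, h3, h1', h2', h3', mul_sub, sub_mul, smul_smul]
    module
  have hcH : Commute Ω H := by
    unfold Commute SemiconjBy
    simp only [hΩ, add_mul, mul_add, smul_mul_assoc, mul_smul_comm, smul_add, smul_sub,
      mul_assoc, h1, h2, h3, h1', h2', h3', mul_sub, sub_mul, smul_smul]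
    module
  have hcF : Commute Ω F := by
    unfold Commute SemiconjBy
    simp only [hΩ, add_mul, mul_add, smul_mul_assoc, mul_smul_comm, smul_add, smul_sub,
      mul_assoc, h1, h2, h3, h1', h2', h3', mul_sub, sub_mul, smul_smul]
    module
  constructor
  · -- internal direct sum
    rw [DirectSum.isInternal_submodule_iff_iSupIndep_and_iSup_eq_top]
    refine ⟨Module.End.independent_maxGenEigenspace Ω, ?_⟩
    rw [← top_le_iff, ← hdiag]
    refine iSup_le fun μ => fun x hx => ?_
    -- Ω preserves the eigenspace of H
    have hinv : ∀ y : M, y ∈ H.eigenspace μ → Ω y ∈ H.eigenspace μ := by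
      intro y hy
      rw [Module.End.mem_eigenspace_iff] at hy ⊢
      calc H (Ω y) = (H * Ω) y := rfl
        _ = (Ω * H) y := by rw [hcH.eq]
        _ = Ω (H y) := rfl
        _ = μ • Ω y := by rw [hy, map_smul]
    haveI := hfin μ
    have htop := Module.End.iSup_maxGenEigenspace_eq_top (Ω.restrict hinv)
    have hmem : x ∈ Submodule.map (H.eigenspace μ).subtype
        (⨆ c : ℂ, Module.End.maxGenEigenspace (Ω.restrict hinv) c) :=
      ⟨⟨x, hx⟩, by rw [htop]; trivial, rfl⟩
    rw [Submodule.map_iSup] at hmem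
    have hle : ∀ c : ℂ, Submodule.map (H.eigenspace μ).subtype
        (Module.End.maxGenEigenspace (Ω.restrict hinv) c) ≤ Ω.maxGenEigenspace c := by
      intro c
      show Submodule.map _ (Module.End.genEigenspace (Ω.restrict hinv) c ⊤) ≤ _
      rw [Module.End.genEigenspace_restrict Ω _ _ _ hinv]
      exact Submodule.map_comap_le _ _
    exact (iSup_mono hle) hmem
  · -- invariance under E, H, F
    intro c m hm
    exact ⟨Module.End.mapsTo_maxGenEigenspace_of_comm hcE c hm,
      Module.End.mapsTo_maxGenEigenspace_of_comm hcH c hm,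
      Module.End.mapsTo_maxGenEigenspace_of_comm hcF c hm⟩
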